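/- For all natural numbers n and k with 1 ≤ k ≤ n, letting m = ⌊n/k⌋ (integer floor division), it holds that ((n − m)/n)^k + Σ_{t=m+1}^{n} (1/t)·((n − t)/n)^k ≤ 2.7/e, and in particular this quantity is strictly less than 1. -/

import Mathlib

open Finset

private lemma peel_bot (f : ℕ → ℝ) (hf : ∀ t, 0 ≤ f t) (c n : ℕ) :
    ∑ t ∈ Icc c n, f t ≤ f c + ∑ t ∈ Icc (c+1) n, f t := by
  rcases le_or_gt c n with h | h
  · have he : Icc c n = insert c (Icc (c+1) n) := by
      ext x; simp only [Finset.mem_Icc, Finset.mem_insert]; omega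
    rw [he, Finset.sum_insert (by simp)]
  · rw [Finset.Icc_eq_empty (by omega)]
    simp only [Finset.sum_empty]
    exact add_nonneg (hf c) (Finset.sum_nonneg fun t _ => hf t)

private lemma geom_tail (r : ℝ) (h0 : 0 < r) (h1 : r < 1) (c N : ℕ) :
    ∑ t ∈ Icc c N, r ^ t ≤ r ^ c / (1 - r) := by
  rcases le_or_gt c (N+1) with h | h
  · rw [← Finset.Ico_add_one_right_eq_Icc, geom_sum_Ico' h1.ne h]
    exact div_le_div₀ (pow_nonneg h0.le c)
      (by nlinarith [pow_nonneg h0.le (N+1)]) (by linarith) le_rfl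
  · rw [Finset.Icc_eq_empty (by omega)]
    simp only [Finset.sum_empty]
    exact div_nonneg (pow_nonneg h0.le c) (by linarith)

private lemma tail_bound (r : ℝ) (h0 : 0 < r) (h1 : r < 1) (c N : ℕ) (hc : 0 < c) :
    ∑ t ∈ Icc c N, (1/(t:ℝ)) * r ^ t ≤ (1/(c:ℝ)) * (r ^ c / (1 - r)) := by
  have hcR : (0:ℝ) < c := by exact_mod_cast hc
  calc ∑ t ∈ Icc c N, (1/(t:ℝ)) * r ^ t
      ≤ ∑ t ∈ Icc c N, (1/(c:ℝ)) * r ^ t := by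
        apply Finset.sum_le_sum
        intro t ht
        have h1t : c ≤ t := (Finset.mem_Icc.mp ht).1
        have : (1:ℝ)/t ≤ 1/c := by
          apply one_div_le_one_div_of_le hcR
          exact_mod_cast h1t
        exact mul_le_mul_of_nonneg_right this (pow_nonneg h0.le t)
    _ = (1/(c:ℝ)) * ∑ t ∈ Icc c N, r ^ t := by rw [Finset.mul_sum]
    _ ≤ (1/(c:ℝ)) * (r ^ c / (1 - r)) := by
        apply mul_le_mul_of_nonneg_left (geom_tail r h0 h1 c N) (by positivity)

private lemma pow_step {r c q : ℝ} (j : ℕ) (h0 : 0 ≤ r) (hrc : r ≤ c) (hq : r ^ j ≤ q) :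
    r ^ (j+1) ≤ q * c := by
  have h1 : 0 ≤ r ^ j := pow_nonneg h0 j
  calc r^(j+1) = r^j * r := by ring
    _ ≤ q * c := mul_le_mul hq hrc h0 (le_trans h1 hq)

set_option maxHeartbeats 1000000 in
theorem stmt_4 (n k : ℕ) (hk : 1 ≤ k) (hkn : k ≤ n) :
    (((n : ℝ) - (n / k : ℕ)) / n) ^ k
        + ∑ t ∈ Finset.Icc (n / k + 1) n, (1 / (t : ℝ)) * (((n : ℝ) - t) / n) ^ k
      ≤ 2.7 / Real.exp 1 ∧
    (((n : ℝ) - (n / k : ℕ)) / n) ^ k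
        + ∑ t ∈ Finset.Icc (n / k + 1) n, (1 / (t : ℝ)) * (((n : ℝ) - t) / n) ^ k
      < 1 := by
  have hE1 : (2.7182818283 : ℝ) < Real.exp 1 := Real.exp_one_gt_d9
  have hE2 : Real.exp 1 < 2.7182818286 := Real.exp_one_lt_d9
  have hEpos : (0:ℝ) < Real.exp 1 := Real.exp_pos 1
  have hk0 : 0 < k := hk
  have hn0 : 0 < n := hk.trans hkn
  have hnR : (0:ℝ) < n := by exact_mod_cast hn0
  have hkR : (0:ℝ) < k := by exact_mod_cast hk0
  obtain ⟨m, hm⟩ : ∃ m, m = n / k := ⟨_, rfl⟩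
  rw [← hm]
  have hm1 : 1 ≤ m := hm ▸ (Nat.one_le_div_iff hk0).mpr hkn
  have hmn : m ≤ n := hm ▸ Nat.div_le_self n k
  have hkm : m * k ≤ n := hm ▸ Nat.div_mul_le_self n k
  have hlt : n < (m + 1) * k := by
    have h1 := Nat.div_add_mod n k
    have h2 := Nat.mod_lt n hk0
    have h3 : (m+1)*k = k*(n/k) + k := by rw [hm]; ring
    omega
  set b : ℝ := (k:ℝ)/n with hb
  have hb0 : 0 < b := div_pos hkR hnR
  set r : ℝ := Real.exp (-b) with hr
  have hr0 : 0 < r := Real.exp_pos _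
  have hr1 : r < 1 := Real.exp_lt_one_iff.mpr (by linarith)
  have hmb : 1 < ((m:ℝ) + 1) * b := by
    have hcast : ((m:ℝ) + 1) * b = (((m+1)*k : ℕ):ℝ)/n := by
      rw [hb]; push_cast; ring
    rw [hcast, lt_div_iff₀ hnR, one_mul]
    exact_mod_cast hlt
  have hpow : ∀ t : ℕ, t ≤ n → (((n:ℝ) - t)/n)^k ≤ r ^ t := by
    intro t ht
    have htn : (t:ℝ) ≤ n := by exact_mod_cast ht
    have h1 : ((n:ℝ) - t)/n = 1 - t/n := by field_simp
    have h2 : (0:ℝ) ≤ 1 - t/n := by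
      rw [sub_nonneg, div_le_one hnR]; exact htn
    have h3 : 1 - (t:ℝ)/n ≤ Real.exp (-(t/n)) := by
      have := Real.add_one_le_exp (-(t:ℝ)/n)
      rw [neg_div] at *
      linarith
    calc (((n:ℝ) - t)/n)^k ≤ (Real.exp (-((t:ℝ)/n)))^k := by
          rw [h1]; exact pow_le_pow_left₀ h2 h3 k
      _ = r ^ t := by
          rw [hr, ← Real.exp_nat_mul, ← Real.exp_nat_mul]
          ring_nf
          rw [hb]; ring_nf
  have hA : (((n:ℝ) - m)/n)^k ≤ r ^ m := hpow m hmn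
  have hS : ∑ t ∈ Icc (m+1) n, (1/(t:ℝ)) * (((n:ℝ) - t)/n)^k
      ≤ ∑ t ∈ Icc (m+1) n, (1/(t:ℝ)) * r ^ t := by
    apply Finset.sum_le_sum
    intro t ht
    have ht2 : t ≤ n := (Finset.mem_Icc.mp ht).2
    have : (0:ℝ) ≤ 1/(t:ℝ) := by positivity
    exact mul_le_mul_of_nonneg_left (hpow t ht2) this
  have hfnn : ∀ t : ℕ, 0 ≤ (1/(t:ℝ)) * r ^ t := fun t => by positivity
  have h1r : b * r ≤ 1 - r := by
    have h := Real.add_one_le_exp b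
    have h2 : Real.exp b * r = 1 := by
      rw [hr, ← Real.exp_add]; simp
    nlinarith
  have key : (((n:ℝ) - m)/n)^k
        + ∑ t ∈ Icc (m+1) n, (1/(t:ℝ)) * (((n:ℝ) - t)/n)^k ≤ 2.7 / Real.exp 1 := by
    rcases (by omega : m = 1 ∨ m = 2 ∨ 3 ≤ m) with hm1' | hm2 | hm3
    · -- m = 1 : b > 1/2, r < 0.6066
      subst hm1'
      have hb2 : 1 < 2 * b := by push_cast at hmb; linarith
      have hrbound : r < 0.6066 := by
        have h2 : r ^ 2 = Real.exp (-(2*b)) := by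
          rw [hr, ← Real.exp_nat_mul]; ring_nf
        have h3 : Real.exp (-(2*b)) < Real.exp (-1) := Real.exp_lt_exp.mpr (by linarith)
        have h4 : Real.exp (-1 : ℝ) * Real.exp 1 = 1 := by
          rw [← Real.exp_add]; simp
        have h5 : Real.exp (-1:ℝ) < 0.36796356 := by nlinarith
        have : r ^ 2 < (0.6066:ℝ)^2 := by rw [h2]; nlinarith
        exact lt_of_pow_lt_pow_left₀ 2 (by norm_num) this
      have hsum : ∑ t ∈ Icc 2 n, (1/(t:ℝ)) * r ^ t
          ≤ (1/2) * r^2 + (1/3) * r^3 + (1/4) * r^4 + (1/5) * (r^5/(1-r)) := by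
        calc ∑ t ∈ Icc 2 n, (1/(t:ℝ)) * r ^ t
            ≤ (1/(2:ℕ):ℝ) * r ^ 2 + ∑ t ∈ Icc 3 n, (1/(t:ℝ)) * r ^ t :=
              peel_bot _ hfnn 2 n
          _ ≤ (1/(2:ℕ):ℝ) * r ^ 2 + ((1/(3:ℕ):ℝ) * r ^ 3 + ∑ t ∈ Icc 4 n, (1/(t:ℝ)) * r ^ t) := by
              have := peel_bot (fun t => (1/(t:ℝ)) * r ^ t) hfnn 3 n
              linarith
          _ ≤ (1/(2:ℕ):ℝ) * r ^ 2 + ((1/(3:ℕ):ℝ) * r ^ 3 + ((1/(4:ℕ):ℝ) * r ^ 4 + ∑ t ∈ Icc 5 n, (1/(t:ℝ)) * r ^ t)) := by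
              have := peel_bot (fun t => (1/(t:ℝ)) * r ^ t) hfnn 4 n
              linarith
          _ ≤ (1/(2:ℕ):ℝ) * r ^ 2 + ((1/(3:ℕ):ℝ) * r ^ 3 + ((1/(4:ℕ):ℝ) * r ^ 4 + (1/(5:ℕ):ℝ) * (r^5/(1-r)))) := by
              have := tail_bound r hr0 hr1 5 n (by norm_num)
              linarith
          _ = (1/2) * r^2 + (1/3) * r^3 + (1/4) * r^4 + (1/5) * (r^5/(1-r)) := by
              push_cast; ring
      have hr1' : r ^ 1 ≤ 0.6066 := by simpa using hrbound.le
      have hr2 : r ^ 2 ≤ 0.36796356 := by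
        have := pow_step 1 hr0.le hrbound.le hr1'
        norm_num at this ⊢; linarith
      have hr3 : r ^ 3 ≤ 0.2232067 := by
        have := pow_step 2 hr0.le hrbound.le hr2
        norm_num at this ⊢; linarith
      have hr4 : r ^ 4 ≤ 0.1353972 := by
        have := pow_step 3 hr0.le hrbound.le hr3
        norm_num at this ⊢; linarith
      have hr5 : r ^ 5 ≤ 0.0821320 := by
        have := pow_step 4 hr0.le hrbound.le hr4
        norm_num at this ⊢; linarith
      have hden : (0.3934:ℝ) ≤ 1 - r := by linarith
      have hdiv : r^5/(1-r) ≤ 0.0821320/0.3934 :=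
        div_le_div₀ (by norm_num) hr5 (by norm_num) hden
      have hAr : (((n:ℝ) - (1:ℕ))/n)^k ≤ r ^ 1 := hA
      calc (((n:ℝ) - (1:ℕ))/n)^k + ∑ t ∈ Icc 2 n, (1/(t:ℝ)) * (((n:ℝ) - t)/n)^k
          ≤ r + ((1/2) * r^2 + (1/3) * r^3 + (1/4) * r^4 + (1/5) * (r^5/(1-r))) := by
            have := hS
            simp only [pow_one] at hAr
            linarith
        _ ≤ 0.941 := by linarith
        _ ≤ 2.7 / Real.exp 1 := by
            rw [le_div_iff₀ hEpos]; linarith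
    · -- m = 2 : b > 1/3, r < 0.717
      subst hm2
      have hb3 : 1 < 3 * b := by push_cast at hmb; linarith
      have hrbound : r < 0.717 := by
        have h2 : r ^ 3 = Real.exp (-(3*b)) := by
          rw [hr, ← Real.exp_nat_mul]; ring_nf
        have h3 : Real.exp (-(3*b)) < Real.exp (-1) := Real.exp_lt_exp.mpr (by linarith)
        have h4 : Real.exp (-1 : ℝ) * Real.exp 1 = 1 := by
          rw [← Real.exp_add]; simp
        have h5 : Real.exp (-1:ℝ) < 0.368601 := by nlinarith
        have : r ^ 3 < (0.717:ℝ)^3 := by rw [h2]; nlinarith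
        exact lt_of_pow_lt_pow_left₀ 3 (by norm_num) this
      have hsum : ∑ t ∈ Icc 3 n, (1/(t:ℝ)) * r ^ t
          ≤ (1/3) * r^3 + (1/4) * (r^4/(1-r)) := by
        calc ∑ t ∈ Icc 3 n, (1/(t:ℝ)) * r ^ t
            ≤ (1/(3:ℕ):ℝ) * r ^ 3 + ∑ t ∈ Icc 4 n, (1/(t:ℝ)) * r ^ t :=
              peel_bot _ hfnn 3 n
          _ ≤ (1/(3:ℕ):ℝ) * r ^ 3 + (1/(4:ℕ):ℝ) * (r^4/(1-r)) := by
              have := tail_bound r hr0 hr1 4 n (by norm_num)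
              linarith
          _ = (1/3) * r^3 + (1/4) * (r^4/(1-r)) := by push_cast; ring
      have hr1' : r ^ 1 ≤ 0.717 := by simpa using hrbound.le
      have hr2 : r ^ 2 ≤ 0.514089 := by
        have := pow_step 1 hr0.le hrbound.le hr1'
        norm_num at this ⊢; linarith
      have hr3 : r ^ 3 ≤ 0.36860182 := by
        have := pow_step 2 hr0.le hrbound.le hr2
        norm_num at this ⊢; linarith
      have hr4 : r ^ 4 ≤ 0.26428751 := by
        have := pow_step 3 hr0.le hrbound.le hr3
        norm_num at this ⊢; linarith
      have hden : (0.283:ℝ) ≤ 1 - r := by linarith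
      have hdiv : r^4/(1-r) ≤ 0.26428751/0.283 :=
        div_le_div₀ (by norm_num) hr4 (by norm_num) hden
      have hAr : (((n:ℝ) - (2:ℕ))/n)^k ≤ r ^ 2 := hA
      calc (((n:ℝ) - (2:ℕ))/n)^k + ∑ t ∈ Icc 3 n, (1/(t:ℝ)) * (((n:ℝ) - t)/n)^k
          ≤ r^2 + ((1/3) * r^3 + (1/4) * (r^4/(1-r))) := by
            have := hS
            linarith
        _ ≤ 0.8705 := by linarith
        _ ≤ 2.7 / Real.exp 1 := by
            rw [le_div_iff₀ hEpos]; linarith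
    · -- m ≥ 3
      have hmR : (3:ℝ) ≤ m := by exact_mod_cast hm3
      have hmb34 : 3/4 < (m:ℝ) * b := by
        have h1 : (3:ℝ)/4 ≤ (m:ℝ)/((m:ℝ)+1) := by
          rw [div_le_div_iff₀ (by norm_num) (by linarith)]; linarith
        have h2 : (m:ℝ) * b = ((m:ℝ)/((m:ℝ)+1)) * (((m:ℝ)+1)*b) := by
          field_simp
        nlinarith [div_nonneg (by linarith : (0:ℝ) ≤ (m:ℝ)) (by linarith : (0:ℝ) ≤ (m:ℝ)+1)]
      have hrm : r ^ m = Real.exp (-((m:ℝ)*b)) := by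
        rw [hr, ← Real.exp_nat_mul]; ring_nf
      have hrmlt : r ^ m < Real.exp (-(3/4:ℝ)) := by
        rw [hrm]; exact Real.exp_lt_exp.mpr (by linarith)
      have hexp34 : Real.exp (-(3/4:ℝ)) < 0.4725 := by
        have h1 : Real.exp (-(3/4:ℝ)) ^ 4 = Real.exp (-3) := by
          rw [← Real.exp_nat_mul]; norm_num
        have h2 : Real.exp (-3:ℝ) * Real.exp 3 = 1 := by
          rw [← Real.exp_add]; norm_num
        have h3 : Real.exp 3 = Real.exp 1 ^ 3 := by
          rw [← Real.exp_nat_mul]; norm_num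
        have hE3 : (20.0855:ℝ) < Real.exp 1 ^ 3 := by
          nlinarith [hE1, hEpos, sq_nonneg (Real.exp 1 - 2.7182818283)]
        have h4 : Real.exp (-3:ℝ) < 0.0498 := by
          rw [h3] at h2
          nlinarith [Real.exp_pos (-3:ℝ), hE3, h2]
        have h5 : Real.exp (-(3/4:ℝ)) ^ 4 < (0.4725:ℝ)^4 := by
          rw [h1]; nlinarith
        exact lt_of_pow_lt_pow_left₀ 4 (by norm_num) h5
      have hsum : ∑ t ∈ Icc (m+1) n, (1/(t:ℝ)) * r ^ t ≤ r ^ m := by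
        calc ∑ t ∈ Icc (m+1) n, (1/(t:ℝ)) * r ^ t
            ≤ (1/((m+1:ℕ):ℝ)) * (r^(m+1)/(1-r)) := tail_bound r hr0 hr1 (m+1) n (by omega)
          _ ≤ r ^ m := by
              have hm1R : (0:ℝ) < (m:ℝ) + 1 := by positivity
              have hcast : ((m+1:ℕ):ℝ) = (m:ℝ)+1 := by push_cast; ring
              rw [hcast, div_mul_eq_mul_div, one_mul, div_div,
                div_le_iff₀ (by nlinarith : (0:ℝ) < (1-r)*((m:ℝ)+1))]
              have h6 : r ≤ ((m:ℝ)+1) * (b * r) := by nlinarith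
              have h7 : ((m:ℝ)+1) * (b*r) ≤ ((m:ℝ)+1) * (1-r) := by nlinarith
              have h8 : r ≤ (1-r)*((m:ℝ)+1) := by nlinarith
              calc r ^ (m+1) = r ^ m * r := by ring
                _ ≤ r ^ m * ((1-r)*((m:ℝ)+1)) :=
                    mul_le_mul_of_nonneg_left h8 (pow_nonneg hr0.le m)
      calc (((n:ℝ) - m)/n)^k + ∑ t ∈ Icc (m+1) n, (1/(t:ℝ)) * (((n:ℝ) - t)/n)^k
          ≤ r ^ m + r ^ m := by linarith
        _ ≤ 2 * 0.4725 := by linarith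
        _ ≤ 2.7 / Real.exp 1 := by
            rw [le_div_iff₀ hEpos]; linarith
  refine ⟨key, lt_of_le_of_lt key ?_⟩
  rw [div_lt_one hEpos]
  linarith
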